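/- arXiv:1603.04258 — 2 statements merged into one kernel-verified Lean document; each statement's English description precedes it below -/
import Mathlib

section
/- Let G be the Hamming graph G = K_{n₁}□K_{n₂}□⋯□K_{n_r} with each n_i ≥ 2. Then the betweenness centrality of every vertex v of G is B(v) = (1/2)·(∏_{i=1}^r n_i)·( r − 1 − ∑_{i=1}^r 1/n_i ) + 1/2. -/
open SimpleGraph Finset

/-- The number of shortest `u`-`v` paths (geodesics) in `G`:
the number of paths from `u` to `v` whose length equals the distance `d_G(u,v)`. -/
noncomputable def geodesicCount {V : Type*} (G : SimpleGraph V) (u v : V) : ℕ :=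
  Nat.card {p : G.Walk u v // p.IsPath ∧ p.length = G.dist u v}

/-- The number of shortest `u`-`v` paths in `G` that pass through the vertex `x`. -/
noncomputable def geodesicCountThrough {V : Type*} (G : SimpleGraph V) (u v x : V) : ℕ :=
  Nat.card {p : G.Walk u v // p.IsPath ∧ p.length = G.dist u v ∧ x ∈ p.support}

/-- The pair-dependency of the pair `{u,v}` on `x`:
`δ(u,v|x) = σ(u,v|x) / σ(u,v)`. -/
noncomputable def pairDependency {V : Type*} (G : SimpleGraph V) (u v x : V) : ℚ :=
  (geodesicCountThrough G u v x : ℚ) / (geodesicCount G u v : ℚ)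

/-- The betweenness centrality of a vertex `x`: the sum of the pair-dependencies
`σ(u,v|x)/σ(u,v)` over unordered pairs `{u,v}` with `u ≠ v`, `u ≠ x`, `v ≠ x`
(each unordered pair is counted once, hence the factor `1/2` over ordered pairs). -/
noncomputable def betweenness {V : Type*} [Fintype V] [DecidableEq V] (G : SimpleGraph V) (x : V) : ℚ :=
  (1 / 2) * ∑ u, ∑ v,
    if u ≠ v ∧ u ≠ x ∧ v ≠ x then pairDependency G u v x else 0

/-- The Cartesian (box) product of a family of graphs: two tuples are adjacent iff
they agree in all but one coordinate and differ by an edge in that coordinate. -/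
def boxProdPi {ι : Type*} {V : ι → Type*} (G : ∀ i, SimpleGraph (V i)) :
    SimpleGraph (∀ i, V i) where
  Adj u v := ∃ i, (G i).Adj (u i) (v i) ∧ ∀ j, j ≠ i → u j = v j
  symm := by
    constructor
    rintro u v ⟨i, hadj, heq⟩
    exact ⟨i, hadj.symm, fun j hj => (heq j hj).symm⟩
  loopless := by
    constructor
    rintro u ⟨i, hadj, -⟩
    exact hadj.ne rfl

namespace Ham


variable {r : ℕ} {n : Fin r → ℕ}

abbrev HV (n : Fin r → ℕ) := ∀ i, Fin (n i)

abbrev HG (n : Fin r → ℕ) : SimpleGraph (HV n) := boxProdPi fun i => (⊤ : SimpleGraph (Fin (n i)))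

instance : DecidableRel (HG n).Adj := fun u v =>
  inferInstanceAs (Decidable (∃ i, (⊤ : SimpleGraph (Fin (n i))).Adj (u i) (v i) ∧ ∀ j, j ≠ i → u j = v j))

/-- set of differing coordinates -/
def D (u v : HV n) : Finset (Fin r) := univ.filter fun i => u i ≠ v i

def hd (u v : HV n) : ℕ := (D u v).card

lemma mem_D {u v : HV n} {i : Fin r} : i ∈ D u v ↔ u i ≠ v i := by simp [D]

lemma D_comm (u v : HV n) : D u v = D v u := by ext i; simp [mem_D, ne_comm]

lemma hd_comm (u v : HV n) : hd u v = hd v u := by rw [hd, hd, D_comm]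

@[simp] lemma hd_self (u : HV n) : hd u u = 0 := by simp [hd, D]

lemma hd_eq_zero_iff {u v : HV n} : hd u v = 0 ↔ u = v := by
  simp only [hd, Finset.card_eq_zero, D, Finset.filter_eq_empty_iff]
  constructor
  · intro h; funext i; by_contra hne; exact h (mem_univ i) hne
  · rintro rfl i _; simp

lemma D_subset_union (u v z : HV n) : D u v ⊆ D u z ∪ D z v := by
  intro i hi
  rw [mem_D] at hi
  simp only [Finset.mem_union, mem_D]
  by_contra h
  push_neg at h
  exact hi (h.1.trans h.2)

lemma hd_triangle (u v z : HV n) : hd u v ≤ hd u z + hd z v :=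
  le_trans (Finset.card_le_card (D_subset_union u v z)) (Finset.card_union_le _ _)

lemma adj_iff {u v : HV n} : (HG n).Adj u v ↔ ∃ i, u i ≠ v i ∧ ∀ j, j ≠ i → u j = v j :=
  Iff.rfl

lemma hd_eq_one_of_adj {u v : HV n} (h : (HG n).Adj u v) : hd u v = 1 := by
  obtain ⟨i, hi, hj⟩ := h
  have : D u v = {i} := by
    ext j
    simp only [mem_D, Finset.mem_singleton]
    constructor
    · intro hne; by_contra hji; exact hne (hj j hji)
    · rintro rfl; exact hi
  simp [hd, this]

lemma hd_le_length {u v : HV n} (p : (HG n).Walk u v) : hd u v ≤ p.length := by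
  induction p with
  | nil => simp
  | @cons a b c h q ih =>
    calc hd a c ≤ hd a b + hd b c := hd_triangle _ _ _
    _ ≤ 1 + q.length := by
        have := hd_eq_one_of_adj h; omega
    _ = (SimpleGraph.Walk.cons h q).length := by simp [SimpleGraph.Walk.length_cons]; omega

lemma D_update {u v : HV n} {i : Fin r} (hi : u i ≠ v i) :
    D (Function.update u i (v i)) v = (D u v).erase i := by
  ext j
  simp only [mem_D, Finset.mem_erase]
  rcases eq_or_ne j i with rfl | hj
  · simp [Function.update_self]
  · simp [Function.update_of_ne hj, hj]

lemma exists_geodesic : ∀ (d : ℕ) (u v : HV n), hd u v = d → ∃ p : (HG n).Walk u v, p.length = d := by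
  intro d
  induction d with
  | zero => intro u v h; rw [hd_eq_zero_iff] at h; subst h; exact ⟨SimpleGraph.Walk.nil, rfl⟩
  | succ d ih =>
    intro u v h
    have hne : (D u v).Nonempty := by rw [← Finset.card_pos, ← hd]; omega
    obtain ⟨i, hi⟩ := hne
    rw [mem_D] at hi
    have hadj : (HG n).Adj u (Function.update u i (v i)) := by
      refine ⟨i, ?_, fun j hj => by simp [Function.update_of_ne hj]⟩
      simp only [Function.update_self]
      exact fun he => hi he
    have hd' : hd (Function.update u i (v i)) v = d := by
      rw [hd, D_update hi, Finset.card_erase_of_mem (mem_D.mpr hi)]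
      rw [hd] at h; omega
    obtain ⟨q, hq⟩ := ih _ v hd'
    exact ⟨SimpleGraph.Walk.cons hadj q, by simp [hq]⟩

lemma dist_eq_hd (u v : HV n) : (HG n).dist u v = hd u v := by
  obtain ⟨p, hp⟩ := exists_geodesic (hd u v) u v rfl
  refine le_antisymm (hp ▸ SimpleGraph.dist_le p) ?_
  obtain ⟨q, hq⟩ := SimpleGraph.Reachable.exists_walk_length_eq_dist ⟨p⟩
  calc hd u v ≤ q.length := hd_le_length q
  _ = _ := hq


open SimpleGraph.Walk in
lemma geodesic_support {u v : HV n} (p : (HG n).Walk u v) (hp : p.length = hd u v) :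
    ∀ z ∈ p.support, hd u z + hd z v = hd u v := by
  induction p with
  | nil => intro z hz; simp only [support_nil, List.mem_singleton] at hz; subst hz; simp
  | @cons a b c h q ih =>
    intro z hz
    have hab : hd a b = 1 := hd_eq_one_of_adj h
    have h1 : hd b c ≤ q.length := hd_le_length q
    have h2 : hd a c ≤ hd a b + hd b c := hd_triangle _ _ _
    simp only [length_cons] at hp
    have hlen : q.length = hd b c := by omega
    rcases List.mem_cons.mp (by simpa [support_cons] using hz) with rfl | hz'
    · simp
    · have h3 := ih hlen z hz'
      have t1 : hd a z ≤ hd a b + hd b z := hd_triangle _ _ _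
      have t2 : hd a c ≤ hd a z + hd z c := hd_triangle _ _ _
      omega

open SimpleGraph.Walk in
lemma geodesic_isPath {u v : HV n} (p : (HG n).Walk u v) (hp : p.length = hd u v) : p.IsPath := by
  induction p with
  | nil => exact IsPath.nil
  | @cons a b c h q ih =>
    have hab : hd a b = 1 := hd_eq_one_of_adj h
    have h1 : hd b c ≤ q.length := hd_le_length q
    have h2 : hd a c ≤ hd a b + hd b c := hd_triangle _ _ _
    simp only [length_cons] at hp
    have hlen : q.length = hd b c := by omega
    refine (ih hlen).cons ?_
    intro hmem
    have h3 := geodesic_support q hlen a hmem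
    have h4 : hd a b = hd b a := hd_comm a b
    omega

lemma neighbor_classify {u v w : HV n} (h : (HG n).Adj u w) (hw : hd w v + 1 = hd u v) :
    ∃ i ∈ D u v, w = Function.update u i (v i) := by
  obtain ⟨i, hi, hj⟩ := h
  rw [SimpleGraph.top_adj] at hi
  have key : ∀ j, j ≠ i → (j ∈ D w v ↔ j ∈ D u v) := by
    intro j hji
    rw [mem_D, mem_D, hj j hji]
  have hiD : i ∈ D u v := by
    by_contra hiD
    have hsub : D u v ⊆ D w v := by
      intro j hjD
      have hji : j ≠ i := fun he => hiD (he ▸ hjD)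
      exact (key j hji).mpr hjD
    have := Finset.card_le_card hsub
    rw [hd, hd] at hw; omega
  have hwi : w i = v i := by
    by_contra hwi
    have hsub : D u v ⊆ D w v := by
      intro j hjD
      rcases eq_or_ne j i with rfl | hji
      · exact mem_D.mpr hwi
      · exact (key j hji).mpr hjD
    have := Finset.card_le_card hsub
    rw [hd, hd] at hw; omega
  refine ⟨i, hiD, funext fun j => ?_⟩
  rcases eq_or_ne j i with rfl | hji
  · rw [Function.update_self, hwi]
  · rw [Function.update_of_ne hji, hj j hji]

lemma update_mem_neighbor {u v : HV n} {i : Fin r} (hi : i ∈ D u v) :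
    (HG n).Adj u (Function.update u i (v i)) ∧ hd (Function.update u i (v i)) v + 1 = hd u v := by
  rw [mem_D] at hi
  constructor
  · refine ⟨i, ?_, fun j hj => by simp [Function.update_of_ne hj]⟩
    simp only [Function.update_self, SimpleGraph.top_adj]
    exact hi
  · rw [hd, D_update hi, Finset.card_erase_of_mem (mem_D.mpr hi), ← hd]
    have : 0 < hd u v := Finset.card_pos.mpr ⟨i, mem_D.mpr hi⟩
    omega

lemma filter_neighbor_eq {u v : HV n} {d : ℕ} (huv : hd u v = d + 1) :
    ((HG n).neighborFinset u).filter (fun w => hd w v = d) =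
      (D u v).image (fun i => Function.update u i (v i)) := by
  ext w
  simp only [Finset.mem_filter, SimpleGraph.mem_neighborFinset, Finset.mem_image]
  constructor
  · rintro ⟨hadj, hhd⟩
    obtain ⟨i, hiD, rfl⟩ := neighbor_classify (v := v) hadj (by omega)
    exact ⟨i, hiD, rfl⟩
  · rintro ⟨i, hiD, rfl⟩
    obtain ⟨h1, h2⟩ := update_mem_neighbor hiD
    exact ⟨h1, by omega⟩

lemma card_filter_neighbor {u v : HV n} {d : ℕ} (huv : hd u v = d + 1) :
    (((HG n).neighborFinset u).filter (fun w => hd w v = d)).card = d + 1 := by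
  rw [filter_neighbor_eq huv, Finset.card_image_of_injOn, ← huv, hd]
  intro i hi j hj hij
  by_contra hne
  have h5 : Function.update u i (v i) i = Function.update u j (v j) i := congrFun hij i
  rw [Function.update_self, Function.update_of_ne hne] at h5
  exact (mem_D.mp hi) h5.symm

open SimpleGraph.Walk in
lemma card_geo : ∀ (d : ℕ) (u v : HV n), hd u v = d →
    ((HG n).finsetWalkLength d u v).card = d.factorial := by
  intro d
  induction d with
  | zero =>
    intro u v h
    rw [hd_eq_zero_iff] at h; subst h
    have : (HG n).finsetWalkLength 0 u u = {Walk.nil} := by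
      ext p
      rw [SimpleGraph.mem_finsetWalkLength_iff]
      constructor
      · intro hp; cases p with
        | nil => simp
        | cons h q => simp at hp
      · intro hp; simp only [Finset.mem_singleton] at hp; subst hp; rfl
    simp [this]
  | succ d ih =>
    intro u v h
    have hrw : (HG n).finsetWalkLength (d+1) u v =
        Finset.univ.biUnion fun (w : (HG n).neighborSet u) =>
          ((HG n).finsetWalkLength d w v).map
            ⟨fun p => Walk.cons w.property p, fun _ _ h => by cases h; rfl⟩ := rfl
    rw [hrw, Finset.card_biUnion]
    · have step : ∀ (w : (HV n)), (HG n).Adj u w →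
          ((HG n).finsetWalkLength d w v).card = if hd w v = d then d.factorial else 0 := by
        intro w hadj
        have hle : d + 1 ≤ 1 + hd w v := by
          have h2 := hd_triangle u v w
          have h3 := hd_eq_one_of_adj hadj
          omega
        by_cases hwd : hd w v = d
        · rw [if_pos hwd]; exact ih w v hwd
        · rw [if_neg hwd, Finset.card_eq_zero]
          ext p
          simp only [SimpleGraph.mem_finsetWalkLength_iff, Finset.notMem_empty, iff_false]
          intro hp
          have h6 := hd_le_length p
          have hle2 : d + 1 ≤ 1 + hd w v := hle
          omega
      have sumeq : ∑ (w : (HG n).neighborSet u),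
            (((HG n).finsetWalkLength d (w : HV n) v).map
              ⟨fun p => Walk.cons w.property p, fun _ _ h => by cases h; rfl⟩).card
          = ∑ w ∈ (HG n).neighborFinset u, if hd w v = d then d.factorial else 0 := by
        rw [SimpleGraph.neighborFinset_def, ← Finset.sum_set_coe]
        refine Finset.sum_congr rfl fun w _ => ?_
        rw [Finset.card_map]
        exact step w w.property
      rw [sumeq, ← Finset.sum_filter, Finset.sum_const, card_filter_neighbor h,
        smul_eq_mul, Nat.factorial_succ]
    · intro w1 _ w2 _ hne
      simp only [Finset.disjoint_left, Finset.mem_map, Function.Embedding.coeFn_mk]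
      rintro p ⟨q1, hq1, rfl⟩ ⟨q2, hq2, heq⟩
      apply hne
      have hs := congrArg Walk.support heq
      change u :: q2.support = u :: q1.support at hs
      simp only [Walk.support_cons, List.cons.injEq, true_and] at hs
      rw [Walk.support_eq_cons q2, Walk.support_eq_cons q1] at hs
      exact Subtype.ext (List.cons.injEq .. ▸ hs).1.symm

lemma natCard_walkLen (u v : HV n) (d : ℕ) :
    Nat.card {p : (HG n).Walk u v // p.length = d} = ((HG n).finsetWalkLength d u v).card := by
  rw [← Nat.card_eq_finsetCard]
  exact Nat.card_congr (Equiv.subtypeEquivRight fun p =>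
    (SimpleGraph.mem_finsetWalkLength_iff).symm)

lemma geodesicCount_eq (u v : HV n) : geodesicCount (HG n) u v = (hd u v).factorial := by
  rw [geodesicCount]
  have h1 : ∀ p : (HG n).Walk u v, (p.IsPath ∧ p.length = (HG n).dist u v) ↔ p.length = hd u v := by
    intro p
    rw [dist_eq_hd]
    exact ⟨fun h => h.2, fun h => ⟨geodesic_isPath p h, h⟩⟩
  rw [Nat.card_congr (Equiv.subtypeEquivRight h1), natCard_walkLen, card_geo _ u v rfl]

open SimpleGraph.Walk in
lemma append_inj : ∀ {u x v : HV n} (q₁ q₂ : (HG n).Walk u x) (r₁ r₂ : (HG n).Walk x v),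
    q₁.length = q₂.length → q₁.append r₁ = q₂.append r₂ → q₁ = q₂ ∧ r₁ = r₂ := by
  intro u x v q₁
  induction q₁ with
  | nil =>
    intro q₂ r₁ r₂ hlen happ
    cases q₂ with
    | nil => exact ⟨rfl, happ⟩
    | cons h q => simp [length_cons] at hlen
  | @cons a b₁ _ h₁ q₁' ih =>
    intro q₂ r₁ r₂ hlen happ
    cases q₂ with
    | nil => simp [length_cons] at hlen
    | @cons _ b₂ _ h₂ q₂' =>
      have hb : b₁ = b₂ := by
        have := congrArg (fun w => w.getVert 1) happ
        simpa [cons_append] using this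
      subst hb
      rw [cons_append, cons_append] at happ
      simp only [cons.injEq, heq_iff_eq] at happ
      rw [length_cons, length_cons] at hlen
      obtain ⟨h12, h⟩ := ih q₂' r₁ r₂ (by omega) happ.2
      exact ⟨by rw [h12], h⟩

open SimpleGraph.Walk in
lemma geodesicCountThrough_eq (u v x : HV n) :
    geodesicCountThrough (HG n) u v x =
      if hd u x + hd x v = hd u v then (hd u x).factorial * (hd x v).factorial else 0 := by
  rw [geodesicCountThrough]
  have h1 : ∀ p : (HG n).Walk u v,
      (p.IsPath ∧ p.length = (HG n).dist u v ∧ x ∈ p.support) ↔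
        (p.length = hd u v ∧ x ∈ p.support) := by
    intro p
    rw [dist_eq_hd]
    exact ⟨fun h => ⟨h.2.1, h.2.2⟩, fun h => ⟨geodesic_isPath p h.1, h.1, h.2⟩⟩
  rw [Nat.card_congr (Equiv.subtypeEquivRight h1)]
  by_cases hbtw : hd u x + hd x v = hd u v
  · rw [if_pos hbtw]
    have key : Nat.card ({q : (HG n).Walk u x // q.length = hd u x} ×
        {r : (HG n).Walk x v // r.length = hd x v}) =
        Nat.card {p : (HG n).Walk u v // p.length = hd u v ∧ x ∈ p.support} := by
      apply Nat.card_eq_of_bijective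
        (f := fun qr => ⟨qr.1.1.append qr.2.1, by
          rw [length_append, qr.1.2, qr.2.2]; exact hbtw, by
          rw [mem_support_append_iff]; exact Or.inl (end_mem_support _)⟩)
      constructor
      · rintro ⟨⟨q₁, hq₁⟩, ⟨r₁, hr₁⟩⟩ ⟨⟨q₂, hq₂⟩, ⟨r₂, hr₂⟩⟩ he
        simp only [Subtype.mk.injEq] at he
        obtain ⟨e1, e2⟩ := append_inj q₁ q₂ r₁ r₂ (by rw [hq₁, hq₂]) he
        simp [e1, e2]
      · rintro ⟨p, hp, hx⟩
        obtain ⟨q, r, rfl⟩ := mem_support_iff_exists_append.mp hx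
        have hlq : hd u x ≤ q.length := hd_le_length q
        have hlr : hd x v ≤ r.length := hd_le_length r
        have hsum : q.length + r.length = hd u v := by rw [← length_append]; exact hp
        have hq : q.length = hd u x := by omega
        have hr : r.length = hd x v := by omega
        exact ⟨⟨⟨q, hq⟩, ⟨r, hr⟩⟩, rfl⟩
    rw [← key, Nat.card_prod, natCard_walkLen, natCard_walkLen,
      card_geo _ u x rfl, card_geo _ x v rfl]
  · rw [if_neg hbtw]
    have : IsEmpty {p : (HG n).Walk u v // p.length = hd u v ∧ x ∈ p.support} := by
      refine ⟨fun ⟨p, hp, hx⟩ => hbtw ?_⟩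
      exact geodesic_support p hp x hx
    exact Nat.card_of_isEmpty

lemma D_eq_empty_iff {u x : HV n} : D u x = ∅ ↔ u = x := by
  rw [← hd_eq_zero_iff, hd, Finset.card_eq_zero]

lemma D_union_of_disjoint {u w x : HV n} (h : Disjoint (D u x) (D x w)) :
    D u w = D u x ∪ D x w := by
  apply Finset.Subset.antisymm (D_subset_union u w x)
  intro i hi
  rcases Finset.mem_union.mp hi with hiA | hiB
  · have hnB : i ∉ D x w := Finset.disjoint_left.mp h hiA
    rw [mem_D, not_not] at hnB
    rw [mem_D]
    exact fun he => (mem_D.mp hiA) (he.trans hnB.symm)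
  · have hnA : i ∉ D u x := Finset.disjoint_right.mp h hiB
    rw [mem_D, not_not] at hnA
    rw [mem_D]
    exact fun he => (mem_D.mp hiB) (hnA.symm.trans he)

lemma btw_iff_disjoint (u w x : HV n) :
    hd u x + hd x w = hd u w ↔ Disjoint (D u x) (D x w) := by
  constructor
  · intro h
    have h1 := Finset.card_le_card (D_subset_union u w x)
    have h2 := Finset.card_union_add_card_inter (D u x) (D x w)
    rw [Finset.disjoint_iff_inter_eq_empty, ← Finset.card_eq_zero]
    rw [hd, hd, hd] at h
    omega
  · intro h
    rw [hd, hd, hd, D_union_of_disjoint h, Finset.card_union_of_disjoint h]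

/-- abstract pair weight -/
def Gq (A B : Finset (Fin r)) : ℚ :=
  if A.Nonempty ∧ B.Nonempty ∧ Disjoint A B
  then ((A.card.factorial * B.card.factorial : ℕ) : ℚ) / (((A.card + B.card).factorial : ℕ) : ℚ)
  else 0

lemma pairDependency_eq (u w x : HV n) :
    pairDependency (HG n) u w x =
      if hd u x + hd x w = hd u w
      then (((hd u x).factorial * (hd x w).factorial : ℕ) : ℚ) / (((hd u w).factorial : ℕ) : ℚ)
      else 0 := by
  rw [pairDependency, geodesicCount_eq, geodesicCountThrough_eq]
  split_ifs with h
  · norm_num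
  · norm_num

lemma term_eq (x u w : HV n) :
    (if u ≠ w ∧ u ≠ x ∧ w ≠ x then pairDependency (HG n) u w x else 0) =
      Gq (D u x) (D x w) := by
  rw [Gq, pairDependency_eq]
  by_cases hdis : Disjoint (D u x) (D x w)
  · by_cases hu : u = x
    · have hA : ¬ (D u x).Nonempty := by
        rw [Finset.nonempty_iff_ne_empty, not_not]; exact D_eq_empty_iff.mpr hu
      rw [if_neg (fun hc => hc.2.1 hu), if_neg (fun hc => hA hc.1)]
    · by_cases hw : w = x
      · have hB : ¬ (D x w).Nonempty := by
          rw [Finset.nonempty_iff_ne_empty, not_not, D_comm]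
          exact D_eq_empty_iff.mpr hw
        rw [if_neg (fun hc => hc.2.2 hw), if_neg (fun hc => hB hc.2.1)]
      · have hA : (D u x).Nonempty := by
          rw [Finset.nonempty_iff_ne_empty]
          exact fun he => hu (D_eq_empty_iff.mp he)
        have hB : (D x w).Nonempty := by
          rw [Finset.nonempty_iff_ne_empty]
          intro he; apply hw; rw [D_comm] at he; exact D_eq_empty_iff.mp he
        have huw : u ≠ w := by
          intro he; subst he
          rw [D_comm x u] at hdis
          have := disjoint_self.mp hdis
          exact hu (D_eq_empty_iff.mp this)
        have hbtw := (btw_iff_disjoint u w x).mpr hdis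
        have hcard : hd u w = (D u x).card + (D x w).card := by
          rw [hd, D_union_of_disjoint hdis, Finset.card_union_of_disjoint hdis]
        rw [if_pos ⟨huw, hu, hw⟩, if_pos hbtw, if_pos ⟨hA, hB, hdis⟩, hcard]
        rfl
  · have h0 : ¬((D u x).Nonempty ∧ (D x w).Nonempty ∧ Disjoint (D u x) (D x w)) :=
      fun hc => hdis hc.2.2
    rw [if_neg h0]
    split_ifs with h1 h2
    · exact absurd ((btw_iff_disjoint u w x).mp h2) hdis
    · rfl
    · rfl

lemma card_fiber (x : HV n) (A : Finset (Fin r)) :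
    (univ.filter fun u : HV n => D u x = A).card = ∏ i ∈ A, (n i - 1) := by
  rw [← Fintype.card_subtype]
  have he : ∀ u : HV n, D u x = A ↔ ∀ i, (if i ∈ A then u i ≠ x i else u i = x i) := by
    intro u
    rw [Finset.ext_iff]
    constructor
    · intro h i
      by_cases hi : i ∈ A
      · rw [if_pos hi]; exact mem_D.mp ((h i).mpr hi)
      · rw [if_neg hi]
        by_contra hne
        exact hi ((h i).mp (mem_D.mpr hne))
    · intro h i
      rw [mem_D]
      by_cases hi : i ∈ A
      · have := h i; rw [if_pos hi] at this; exact ⟨fun _ => hi, fun _ => this⟩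
      · have := h i; rw [if_neg hi] at this
        exact ⟨fun hne => absurd this hne, fun hiA => absurd hiA hi⟩
  rw [Fintype.card_congr (Equiv.subtypeEquivRight he)]
  rw [Fintype.card_congr (Equiv.subtypePiEquivPi
    (p := fun i (a : Fin (n i)) => if i ∈ A then a ≠ x i else a = x i))]
  rw [Fintype.card_pi]
  rw [← Finset.prod_filter_mul_prod_filter_not univ (fun i => i ∈ A)]
  have h1 : ∀ i ∈ univ.filter (fun i => i ∈ A),
      Fintype.card {a : Fin (n i) // if i ∈ A then a ≠ x i else a = x i} = n i - 1 := by
    intro i hi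
    rw [Finset.mem_filter] at hi
    have : ∀ a : Fin (n i), (if i ∈ A then a ≠ x i else a = x i) ↔ ¬(a = x i) := by
      intro a; rw [if_pos hi.2]
    rw [Fintype.card_congr (Equiv.subtypeEquivRight this), Fintype.card_subtype_compl,
      Fintype.card_subtype_eq, Fintype.card_fin]
  have h2 : ∀ i ∈ univ.filter (fun i => ¬ i ∈ A),
      Fintype.card {a : Fin (n i) // if i ∈ A then a ≠ x i else a = x i} = 1 := by
    intro i hi
    rw [Finset.mem_filter] at hi
    have : ∀ a : Fin (n i), (if i ∈ A then a ≠ x i else a = x i) ↔ a = x i := by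
      intro a; rw [if_neg hi.2]
    rw [Fintype.card_congr (Equiv.subtypeEquivRight this), Fintype.card_subtype_eq]
  rw [Finset.prod_congr rfl h1, Finset.prod_congr rfl h2, Finset.prod_const_one, mul_one]
  congr 1
  ext i
  simp

lemma sum_fiber (hn : ∀ i, 2 ≤ n i) (x : HV n) (F : Finset (Fin r) → ℚ) :
    ∑ u : HV n, F (D u x) =
      ∑ A : Finset (Fin r), (∏ i ∈ A, ((n i : ℚ) - 1)) * F A := by
  rw [← Finset.sum_fiberwise_of_maps_to (g := fun u : HV n => D u x) (t := univ)
    (fun u _ => Finset.mem_univ _) (fun u => F (D u x))]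
  refine Finset.sum_congr rfl fun A _ => ?_
  have hc : ∑ u ∈ univ.filter (fun u : HV n => D u x = A), F (D u x)
       = ∑ u ∈ univ.filter (fun u : HV n => D u x = A), F A :=
    Finset.sum_congr rfl (fun u hu => by rw [(Finset.mem_filter.mp hu).2])
  rw [hc, Finset.sum_const, card_fiber, nsmul_eq_mul]
  congr 1
  rw [Nat.cast_prod]
  refine Finset.prod_congr rfl fun i _ => ?_
  have h2 := hn i
  rw [Nat.cast_sub (le_trans one_le_two h2)]
  norm_num

def wq (n : Fin r → ℕ) (A : Finset (Fin r)) : ℚ := ∏ i ∈ A, ((n i : ℚ) - 1)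

lemma sum_pairs :
    ∑ A : Finset (Fin r), ∑ B : Finset (Fin r), wq n A * wq n B * Gq A B =
      ∑ C : Finset (Fin r), ∑ A ∈ C.powerset, wq n A * wq n (C \ A) * Gq A (C \ A) := by
  rw [← Finset.sum_product' (s := univ) (t := univ)
    (f := fun A B => wq n A * wq n B * Gq A B)]
  rw [Finset.sum_sigma' (s := univ) (t := fun C => C.powerset)
    (f := fun C A => wq n A * wq n (C \ A) * Gq A (C \ A))]
  rw [← Finset.sum_filter_of_ne (p := fun p : Finset (Fin r) × Finset (Fin r) =>
    Disjoint p.1 p.2) (f := fun p => wq n p.1 * wq n p.2 * Gq p.1 p.2) ?hp]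
  case hp =>
    intro p _ hne
    by_contra hdis
    apply hne
    show wq n p.1 * wq n p.2 * Gq p.1 p.2 = 0
    unfold Gq
    rw [if_neg (fun hc => hdis hc.2.2), mul_zero]
  refine Finset.sum_nbij' (i := fun p => ⟨p.1 ∪ p.2, p.1⟩)
    (j := fun q => (q.2, q.1 \ q.2)) ?_ ?_ ?_ ?_ ?_
  · intro p hp
    simp only [Finset.mem_sigma, Finset.mem_univ, Finset.mem_powerset, true_and]
    exact Finset.subset_union_left
  · intro q hq
    simp only [Finset.mem_sigma, Finset.mem_univ, Finset.mem_powerset, true_and] at hq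
    simp only [Finset.mem_filter, Finset.mem_product, Finset.mem_univ, true_and, and_self]
    exact Finset.disjoint_sdiff
  · intro p hp
    simp only [Finset.mem_filter] at hp
    simp only [Finset.union_sdiff_cancel_left hp.2]
  · intro q hq
    simp only [Finset.mem_sigma, Finset.mem_univ, Finset.mem_powerset, true_and] at hq
    simp only [Finset.union_sdiff_of_subset hq]
  · intro p hp
    simp only [Finset.mem_filter] at hp
    simp only [Finset.union_sdiff_cancel_left hp.2]

lemma inner_sum (C : Finset (Fin r)) :
    ∑ A ∈ C.powerset, wq n A * wq n (C \ A) * Gq A (C \ A) =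
      wq n C * (if C = ∅ then 0 else (C.card : ℚ) - 1) := by
  have hterm : ∀ A ∈ C.powerset, wq n A * wq n (C \ A) * Gq A (C \ A) =
      wq n C * (if 0 < A.card ∧ A.card < C.card
        then ((A.card.factorial * (C.card - A.card).factorial : ℕ) : ℚ)
          / ((C.card.factorial : ℕ) : ℚ) else 0) := by
    intro A hA
    rw [Finset.mem_powerset] at hA
    have hw : wq n A * wq n (C \ A) = wq n C := by
      rw [wq, wq, wq, ← Finset.prod_union Finset.sdiff_disjoint.symm,
        Finset.union_sdiff_of_subset hA]
    have hcards : (C \ A).card = C.card - A.card := Finset.card_sdiff_of_subset hA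
    have hle := Finset.card_le_card hA
    have e1 : A.Nonempty ↔ 0 < A.card := Finset.card_pos.symm
    have e2 : (C \ A).Nonempty ↔ A.card < C.card := by
      rw [← Finset.card_pos, hcards]; omega
    unfold Gq
    by_cases h1 : 0 < A.card ∧ A.card < C.card
    · rw [if_pos ⟨e1.mpr h1.1, e2.mpr h1.2, Finset.sdiff_disjoint.symm⟩, if_pos h1, ← hw]
      rw [hcards]
      have h3 : A.card + (C.card - A.card) = C.card := by omega
      rw [h3]
    · rw [if_neg, if_neg h1, mul_zero, mul_zero]
      intro hc
      exact h1 ⟨e1.mp hc.1, e2.mp hc.2.1⟩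
  rw [Finset.sum_congr rfl hterm, ← Finset.mul_sum]
  congr 1
  rw [Finset.sum_powerset_apply_card (f := fun k => if 0 < k ∧ k < C.card
    then ((k.factorial * (C.card - k).factorial : ℕ) : ℚ) / ((C.card.factorial : ℕ) : ℚ) else 0)]
  by_cases hC : C = ∅
  · subst hC; simp
  · rw [if_neg hC]
    have hc1 : 1 ≤ C.card := Finset.card_pos.mpr (Finset.nonempty_iff_ne_empty.mpr hC)
    have hne : ((C.card.factorial : ℕ) : ℚ) ≠ 0 :=
      Nat.cast_ne_zero.mpr (Nat.factorial_ne_zero _)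
    have hstep : ∀ m ∈ Finset.range (C.card + 1),
        C.card.choose m • (if 0 < m ∧ m < C.card
          then ((m.factorial * (C.card - m).factorial : ℕ) : ℚ)
            / ((C.card.factorial : ℕ) : ℚ) else 0) =
        if 0 < m ∧ m < C.card then (1 : ℚ) else 0 := by
      intro m hm
      by_cases h : 0 < m ∧ m < C.card
      · rw [if_pos h, if_pos h, nsmul_eq_mul, ← mul_div_assoc, div_eq_one_iff_eq hne]
        have hfac : C.card.choose m * (m.factorial * (C.card - m).factorial)
            = C.card.factorial := by
          rw [← Nat.choose_mul_factorial_mul_factorial (le_of_lt h.2)]; ring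
        exact_mod_cast congrArg (Nat.cast : ℕ → ℚ) hfac
      · rw [if_neg h, if_neg h, smul_zero]
    rw [Finset.sum_congr rfl hstep, Finset.sum_ite, Finset.sum_const_zero, add_zero,
      Finset.sum_const, nsmul_eq_mul, mul_one]
    have hfil : (Finset.range (C.card + 1)).filter (fun m => 0 < m ∧ m < C.card)
        = Finset.Ioo 0 C.card := by
      ext m
      simp only [Finset.mem_filter, Finset.mem_range, Finset.mem_Ioo]
      omega
    rw [hfil, Nat.card_Ioo, Nat.sub_zero, Nat.cast_sub hc1, Nat.cast_one]

lemma sum_wq_powerset (s : Finset (Fin r)) :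
    ∑ C ∈ s.powerset, wq n C = ∏ i ∈ s, (n i : ℚ) := by
  have h := Finset.prod_add (fun i => (n i : ℚ) - 1) (fun _ => (1:ℚ)) s
  simp only [Finset.prod_const_one, mul_one, sub_add_cancel] at h
  unfold wq
  rw [← h]

lemma sum_wq : ∑ C : Finset (Fin r), wq n C = ∏ i, (n i : ℚ) := by
  rw [← Finset.powerset_univ, sum_wq_powerset]

lemma sum_card_wq (hn : ∀ i, 2 ≤ n i) :
    ∑ C : Finset (Fin r), wq n C * (C.card : ℚ) =
      (r : ℚ) * (∏ i, (n i : ℚ)) - (∏ i, (n i : ℚ)) * ∑ j, 1 / (n j : ℚ) := by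
  have hnz : ∀ j, ((n j : ℚ)) ≠ 0 := fun j => by
    have := hn j; positivity
  have hcard : ∀ C : Finset (Fin r), (C.card : ℚ) = ∑ j : Fin r, if j ∈ C then 1 else 0 := by
    intro C
    rw [Finset.sum_ite_mem, Finset.univ_inter, Finset.sum_const, nsmul_eq_mul, mul_one]
  calc ∑ C : Finset (Fin r), wq n C * (C.card : ℚ)
      = ∑ C : Finset (Fin r), ∑ j : Fin r, (if j ∈ C then wq n C else 0) := by
        refine Finset.sum_congr rfl fun C _ => ?_
        rw [hcard, Finset.mul_sum]
        exact Finset.sum_congr rfl fun j _ => by split_ifs <;> simp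
    _ = ∑ j : Fin r, ∑ C : Finset (Fin r), (if j ∈ C then wq n C else 0) := Finset.sum_comm
    _ = ∑ j : Fin r, ((∏ i, (n i : ℚ)) - ∏ i ∈ univ.erase j, (n i : ℚ)) := by
        refine Finset.sum_congr rfl fun j _ => ?_
        have hsplit := Finset.sum_filter_add_sum_filter_not univ
          (fun C : Finset (Fin r) => j ∈ C) (wq n)
        have hfil : univ.filter (fun C : Finset (Fin r) => ¬ j ∈ C)
            = (univ.erase j).powerset := by
          ext C
          simp [Finset.mem_powerset, Finset.subset_erase]
        rw [← Finset.sum_filter, eq_sub_iff_add_eq, ← sum_wq (n := n)]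
        rw [← hsplit, hfil, sum_wq_powerset]
    _ = _ := by
        rw [Finset.sum_sub_distrib, Finset.sum_const, Finset.card_univ, Fintype.card_fin,
          nsmul_eq_mul, Finset.mul_sum]
        congr 1
        refine Finset.sum_congr rfl fun j _ => ?_
        have h := Finset.prod_erase_mul univ (fun i => (n i : ℚ)) (Finset.mem_univ j)
        rw [mul_one_div, eq_div_iff (hnz j)]
        exact h

lemma betweenness_eq (hn : ∀ i, 2 ≤ n i) (x : HV n) :
    betweenness (HG n) x =
      (1 / 2) * (∏ i, (n i : ℚ)) * ((r : ℚ) - 1 - ∑ i, (1 : ℚ) / (n i : ℚ)) + 1 / 2 := by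
  rw [betweenness]
  have hs : ∑ u : HV n, ∑ w : HV n,
      (if u ≠ w ∧ u ≠ x ∧ w ≠ x then pairDependency (HG n) u w x else 0) =
      ∑ A : Finset (Fin r), ∑ B : Finset (Fin r), wq n A * wq n B * Gq A B := by
    calc ∑ u : HV n, ∑ w : HV n,
        (if u ≠ w ∧ u ≠ x ∧ w ≠ x then pairDependency (HG n) u w x else 0)
        = ∑ u : HV n, ∑ w : HV n, Gq (D u x) (D w x) := by
          refine Finset.sum_congr rfl fun u _ => Finset.sum_congr rfl fun w _ => ?_
          rw [term_eq, D_comm x w]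
      _ = ∑ u : HV n, ∑ B : Finset (Fin r), wq n B * Gq (D u x) B := by
          exact Finset.sum_congr rfl fun u _ => sum_fiber hn x _
      _ = ∑ B : Finset (Fin r), ∑ u : HV n, wq n B * Gq (D u x) B := Finset.sum_comm
      _ = ∑ B : Finset (Fin r), wq n B * ∑ u : HV n, Gq (D u x) B := by
          exact Finset.sum_congr rfl fun B _ => (Finset.mul_sum _ _ _).symm
      _ = ∑ B : Finset (Fin r), wq n B * ∑ A : Finset (Fin r), wq n A * Gq A B := by
          exact Finset.sum_congr rfl fun B _ =>
            congrArg (wq n B * ·) (sum_fiber hn x (fun A => Gq A B))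
      _ = ∑ A : Finset (Fin r), ∑ B : Finset (Fin r), wq n A * wq n B * Gq A B := by
          rw [Finset.sum_comm]
          refine Finset.sum_congr rfl fun B _ => ?_
          rw [Finset.mul_sum]
          exact Finset.sum_congr rfl fun A _ => by ring
  rw [hs, sum_pairs, Finset.sum_congr rfl (fun C _ => inner_sum C)]
  have hsplit : ∀ C : Finset (Fin r),
      wq n C * (if C = ∅ then (0:ℚ) else (C.card : ℚ) - 1) =
      wq n C * ((C.card : ℚ) - 1) + (if C = ∅ then 1 else 0) := by
    intro C
    by_cases hC : C = ∅
    · subst hC; simp [wq]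
    · rw [if_neg hC, if_neg hC, add_zero]
  rw [Finset.sum_congr rfl (fun C _ => hsplit C), Finset.sum_add_distrib,
    Finset.sum_ite_eq' univ (∅ : Finset (Fin r)) (fun _ => (1:ℚ)), if_pos (Finset.mem_univ _)]
  have hexp : ∀ C : Finset (Fin r), wq n C * ((C.card : ℚ) - 1)
      = wq n C * (C.card : ℚ) - wq n C := fun C => by ring
  rw [Finset.sum_congr rfl (fun C _ => hexp C), Finset.sum_sub_distrib, sum_card_wq hn, sum_wq]
  ring

end Ham

/-- In the Hamming graph `K_{n₁} □ ⋯ □ K_{n_r}` (each `nᵢ ≥ 2`),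
every vertex `v` has betweenness centrality
`B(v) = (1/2)·(∏ᵢ nᵢ)·(r - 1 - ∑ᵢ 1/nᵢ) + 1/2`. -/
theorem betweenness_hamming {r : ℕ} (n : Fin r → ℕ) (hn : ∀ i, 2 ≤ n i)
    (v : ∀ i, Fin (n i)) :
    betweenness (boxProdPi fun i => (⊤ : SimpleGraph (Fin (n i)))) v =
      (1 / 2) * (∏ i, (n i : ℚ)) * ((r : ℚ) - 1 - ∑ i, (1 : ℚ) / (n i : ℚ)) + 1 / 2 :=
  Ham.betweenness_eq hn v
end

section
/- Let n ≥ 2, r ≥ 1, and let v be any vertex of the r-fold Cartesian product □_{i=1}^r K_n of the complete graph K_n with itself. Then the betweenness centrality of v is B(v) = (1/2)·( (r−1)·n^r − r·n^{r−1} + 1 ). -/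
open SimpleGraph Finset

section AuxP
open Function

variable {r n : ℕ}

private abbrev HG (r n : ℕ) : SimpleGraph (Fin r → Fin n) :=
  boxProdPi fun _ : Fin r => (⊤ : SimpleGraph (Fin n))

private lemma HG_adj {u w : Fin r → Fin n} :
    (HG r n).Adj u w ↔ ∃ i, u i ≠ w i ∧ ∀ j, j ≠ i → u j = w j := by
  simp only [HG, boxProdPi, top_adj]

private instance : DecidableRel (HG r n).Adj := fun _ _ =>
  decidable_of_iff _ HG_adj.symm

private instance : (HG r n).LocallyFinite := fun _ => by
  infer_instance

private lemma hd_filter (u v : Fin r → Fin n) :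
    hammingDist u v = #(univ.filter fun i => u i ≠ v i) := rfl

private lemma hd_le_one_of_adj {u w : Fin r → Fin n} (h : (HG r n).Adj u w) :
    hammingDist u w ≤ 1 := by
  obtain ⟨i, _, hj⟩ := HG_adj.mp h
  rw [hd_filter]
  calc #(univ.filter fun j => u j ≠ w j) ≤ #({i} : Finset (Fin r)) := by
        apply Finset.card_le_card
        intro j hj'
        rw [Finset.mem_filter] at hj'
        rw [Finset.mem_singleton]
        by_contra hne
        exact hj'.2 (hj j hne)
    _ = 1 := Finset.card_singleton i

private lemma hd_le_length {u v : Fin r → Fin n} (p : (HG r n).Walk u v) :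
    hammingDist u v ≤ p.length := by
  induction p with
  | nil => simp
  | @cons a b c h q ih =>
    calc hammingDist a c ≤ hammingDist a b + hammingDist b c := hammingDist_triangle _ _ _
      _ ≤ 1 + q.length := add_le_add (hd_le_one_of_adj h) ih
      _ = (Walk.cons h q).length := by rw [Walk.length_cons]; omega

private lemma filter_update (u v : Fin r → Fin n) (i : Fin r) (c : Fin n) :
    (univ.filter fun j => Function.update u i c j ≠ v j) =
      if c = v i then (univ.filter fun j => u j ≠ v j).erase i
      else insert i ((univ.filter fun j => u j ≠ v j).erase i) := by
  ext j
  by_cases hj : j = i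
  · subst hj
    split_ifs with hc <;>
      simp [Function.update_self, hc]
  · split_ifs with hc <;>
      simp [Function.update_of_ne hj, hj]

private lemma exists_walk_hd (u v : Fin r → Fin n) :
    ∃ p : (HG r n).Walk u v, p.length = hammingDist u v := by
  generalize hgen : hammingDist u v = d
  induction d generalizing u with
  | zero =>
    obtain rfl := eq_of_hammingDist_eq_zero hgen
    exact ⟨.nil, rfl⟩
  | succ d ih =>
    have hne : ∃ i, u i ≠ v i := by
      by_contra hall
      push_neg at hall
      have h0 : hammingDist u v = 0 := by
        rw [hd_filter, Finset.card_eq_zero, Finset.filter_eq_empty_iff]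
        intro i _
        simp [hall i]
      omega
    obtain ⟨i, hi⟩ := hne
    have hadj : (HG r n).Adj u (Function.update u i (v i)) := by
      refine HG_adj.mpr ⟨i, ?_, fun j hj => by simp [Function.update_of_ne hj]⟩
      simp [Function.update_self]
      exact hi
    have hd' : hammingDist (Function.update u i (v i)) v = d := by
      rw [hd_filter, filter_update, if_pos rfl,
        Finset.card_erase_of_mem (by simp [hi]), ← hd_filter, hgen]
      omega
    obtain ⟨q, hq⟩ := ih _ hd'
    exact ⟨.cons hadj q, by rw [Walk.length_cons, hq]⟩

private lemma dist_eq_hd (u v : Fin r → Fin n) : (HG r n).dist u v = hammingDist u v := by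
  obtain ⟨p, hp⟩ := exists_walk_hd u v
  refine le_antisymm (hp ▸ SimpleGraph.dist_le p) ?_
  obtain ⟨q, hq⟩ := Reachable.exists_walk_length_eq_dist p.reachable
  exact hq ▸ hd_le_length q

private lemma card_neighbor_filter {u v : Fin r → Fin n} {d : ℕ}
    (huv : hammingDist u v = d + 1) :
    #(((HG r n).neighborFinset u).filter fun w => hammingDist w v = d) = d + 1 := by
  have hcard : #(univ.filter fun i => u i ≠ v i) = d + 1 := by rw [← hd_filter, huv]
  rw [← hcard]
  refine (Finset.card_bij (fun i _ => Function.update u i (v i)) ?_ ?_ ?_).symm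
  · intro i hi
    rw [Finset.mem_filter] at hi
    rw [Finset.mem_filter, SimpleGraph.mem_neighborFinset]
    constructor
    · refine HG_adj.mpr ⟨i, ?_, fun j hj => by simp [Function.update_of_ne hj]⟩
      simp [Function.update_self]
      exact hi.2
    · rw [hd_filter, filter_update, if_pos rfl,
        Finset.card_erase_of_mem (by simp [hi.2]), ← hd_filter, huv]
      omega
  · intro i hi j hjmem heq
    by_contra hne
    have := congrFun heq i
    simp only [Function.update_self, Function.update_of_ne hne] at this
    rw [Finset.mem_filter] at hi
    exact hi.2 this.symm
  · intro w hw
    rw [Finset.mem_filter, SimpleGraph.mem_neighborFinset] at hw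
    obtain ⟨hadj, hdw⟩ := hw
    obtain ⟨i, hiw, hjw⟩ := HG_adj.mp hadj
    have hwu : w = Function.update u i (w i) := by
      funext j
      by_cases hj : j = i
      · subst hj; simp [Function.update_self]
      · rw [Function.update_of_ne hj]
        exact (hjw j hj).symm
    rw [hwu, hd_filter, filter_update] at hdw
    split_ifs at hdw with hc
    · have hui : u i ≠ v i := by
        intro heq
        rw [Finset.erase_eq_of_notMem (by simp [heq]), ← hd_filter, huv] at hdw
        omega
      refine ⟨i, by rw [Finset.mem_filter]; exact ⟨Finset.mem_univ i, hui⟩, ?_⟩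
      rw [hwu, hc]
    · exfalso
      rw [Finset.card_insert_of_notMem (Finset.notMem_erase _ _)] at hdw
      have h1 : #(univ.filter fun j => u j ≠ v j) - 1 ≤
          #((univ.filter fun j => u j ≠ v j).erase i) := Finset.pred_card_le_card_erase
      rw [← hd_filter, huv] at h1
      omega

private lemma card_finsetWalkLength_eq :
    ∀ (d : ℕ) (u v : Fin r → Fin n), hammingDist u v = d →
      #((HG r n).finsetWalkLength d u v) = Nat.factorial d := by
  intro d
  induction d with
  | zero =>
    intro u v h
    obtain rfl := eq_of_hammingDist_eq_zero h
    simp [SimpleGraph.finsetWalkLength]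
  | succ d ih =>
    intro u v h
    have hrec : (HG r n).finsetWalkLength (d+1) u v =
        Finset.univ.biUnion fun (w : (HG r n).neighborSet u) =>
          ((HG r n).finsetWalkLength d w v).map
            ⟨fun p => Walk.cons w.property p, fun _ _ => by intro h; cases h; rfl⟩ := rfl
    rw [hrec, Finset.card_biUnion]
    · simp only [Finset.card_map]
      have hsum : ∑ w : (HG r n).neighborSet u, #((HG r n).finsetWalkLength d w v)
          = ∑ w ∈ (HG r n).neighborFinset u, #((HG r n).finsetWalkLength d w v) := by
        rw [Finset.sum_set_coe (f := fun w => #((HG r n).finsetWalkLength d w v))]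
        rw [SimpleGraph.neighborFinset_def]
      rw [hsum, ← Finset.sum_filter_add_sum_filter_not _ (fun w => hammingDist w v = d)]
      have h1 : ∑ w ∈ ((HG r n).neighborFinset u).filter (fun w => hammingDist w v = d),
          #((HG r n).finsetWalkLength d w v)
          = ∑ _w ∈ ((HG r n).neighborFinset u).filter (fun w => hammingDist w v = d),
            Nat.factorial d := by
        refine Finset.sum_congr rfl fun w hw => ?_
        exact ih w v (Finset.mem_filter.mp hw).2
      have h2 : ∑ w ∈ ((HG r n).neighborFinset u).filter (fun w => ¬ hammingDist w v = d),
          #((HG r n).finsetWalkLength d w v) = 0 := by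
        refine Finset.sum_eq_zero fun w hw => ?_
        rw [Finset.mem_filter, SimpleGraph.mem_neighborFinset] at hw
        rw [Finset.card_eq_zero, Finset.eq_empty_iff_forall_notMem]
        intro p hp
        rw [SimpleGraph.mem_finsetWalkLength_iff] at hp
        have hle : hammingDist w v ≤ d := hp ▸ hd_le_length p
        have htri : hammingDist u v ≤ hammingDist u w + hammingDist w v :=
          hammingDist_triangle _ _ _
        have hadj1 : hammingDist u w ≤ 1 := hd_le_one_of_adj hw.1
        omega
      rw [h1, h2, Finset.sum_const, card_neighbor_filter h, add_zero, smul_eq_mul]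
      rw [Nat.factorial_succ]
    · intro w _ w' _ hne
      refine Finset.disjoint_left.mpr ?_
      intro p hp hp'
      rw [Finset.mem_map] at hp hp'
      obtain ⟨q, _, rfl⟩ := hp
      obtain ⟨q', _, h2⟩ := hp'
      apply hne
      have h3 := congrArg (fun (z : (HG r n).Walk u v) => z.getVert 1) h2
      have h4 : q'.getVert 0 = q.getVert 0 := h3
      rw [Walk.getVert_zero, Walk.getVert_zero] at h4
      exact Subtype.ext h4.symm


private lemma takeUntil_start {V : Type*} [DecidableEq V] {G : SimpleGraph V} {x v : V}
    (q : G.Walk x v) (h : x ∈ q.support) :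
    q.takeUntil x h = Walk.nil ∧ q.dropUntil x h = q := by
  cases q with
  | nil => exact ⟨rfl, rfl⟩
  | cons radj q =>
    constructor
    · show (if hx : x = x then _ else _) = Walk.nil
      rw [dif_pos rfl]
    · show (if hx : x = x then _ else _) = Walk.cons radj q
      rw [dif_pos rfl]

private lemma takeUntil_append {V : Type*} [DecidableEq V] {G : SimpleGraph V} :
    ∀ {u x v : V} (p : G.Walk u x) (q : G.Walk x v), p.IsPath →
      ∀ (h : x ∈ (p.append q).support),
      (p.append q).takeUntil x h = p ∧ (p.append q).dropUntil x h = q := by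
  intro u x v p
  induction p with
  | nil => intro q _ h; exact takeUntil_start q h
  | @cons a b c radj p' ih =>
    intro q hp h
    have hax : a ≠ c := by
      intro heq
      subst heq
      exact ((Walk.cons_isPath_iff radj p').mp hp).2 p'.end_mem_support
    have h' : c ∈ (p'.append q).support := by
      have h2 : c ∈ ((Walk.cons radj p').append q).support := h
      rw [Walk.cons_append, Walk.support_cons] at h2
      rcases List.mem_cons.mp h2 with h3 | h3
      · exact absurd h3.symm hax
      · exact h3
    obtain ⟨ht, hdr⟩ := ih q ((Walk.cons_isPath_iff radj p').mp hp).1 h'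
    constructor
    · show (if hx : a = c then _ else _) = Walk.cons radj p'
      rw [dif_neg hax]
      exact congrArg (Walk.cons radj) ht
    · show (if hx : a = c then _ else _) = q
      rw [dif_neg hax]
      exact hdr

private lemma split_lengths {u v x : Fin r → Fin n} (p : (HG r n).Walk u v)
    (hlen : p.length = hammingDist u v) (hsup : x ∈ p.support)
    (h : hammingDist u x + hammingDist x v = hammingDist u v) :
    (p.takeUntil x hsup).length = hammingDist u x ∧
      (p.dropUntil x hsup).length = hammingDist x v := by
  have hsum : (p.takeUntil x hsup).length + (p.dropUntil x hsup).length = p.length := by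
    rw [← Walk.length_append, Walk.take_spec]
  have h1 := hd_le_length (p.takeUntil x hsup)
  have h2 := hd_le_length (p.dropUntil x hsup)
  constructor <;> omega

private lemma card_through_eq (u v x : Fin r → Fin n)
    (h : hammingDist u x + hammingDist x v = hammingDist u v) :
    #(((HG r n).finsetWalkLength (hammingDist u v) u v).filter fun p => x ∈ p.support)
      = Nat.factorial (hammingDist u x) * Nat.factorial (hammingDist x v) := by
  rw [← card_finsetWalkLength_eq (hammingDist u x) u x rfl,
    ← card_finsetWalkLength_eq (hammingDist x v) x v rfl, ← Finset.card_product]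
  refine Finset.card_bij'
    (fun p hp => ((p.takeUntil x (Finset.mem_filter.mp hp).2),
       (p.dropUntil x (Finset.mem_filter.mp hp).2)))
    (fun q _ => q.1.append q.2) ?_ ?_ ?_ ?_
  · intro p hp
    have hmem := Finset.mem_filter.mp hp
    have hlen := SimpleGraph.mem_finsetWalkLength_iff.mp hmem.1
    obtain ⟨e1, e2⟩ := split_lengths p hlen hmem.2 h
    rw [Finset.mem_product]
    exact ⟨SimpleGraph.mem_finsetWalkLength_iff.mpr e1,
      SimpleGraph.mem_finsetWalkLength_iff.mpr e2⟩
  · intro q hq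
    rw [Finset.mem_product, SimpleGraph.mem_finsetWalkLength_iff,
      SimpleGraph.mem_finsetWalkLength_iff] at hq
    rw [Finset.mem_filter, SimpleGraph.mem_finsetWalkLength_iff]
    constructor
    · rw [Walk.length_append, hq.1, hq.2, h]
    · rw [Walk.mem_support_append_iff]
      exact Or.inr q.2.start_mem_support
  · intro p hp
    exact Walk.take_spec p (Finset.mem_filter.mp hp).2
  · intro q hq
    rw [Finset.mem_product, SimpleGraph.mem_finsetWalkLength_iff,
      SimpleGraph.mem_finsetWalkLength_iff] at hq
    have hpath : q.1.IsPath := by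
      apply Walk.isPath_of_length_eq_dist
      rw [hq.1, dist_eq_hd]
    have hmem : x ∈ (q.1.append q.2).support := by
      rw [Walk.mem_support_append_iff]
      exact Or.inr q.2.start_mem_support
    obtain ⟨ht, hdr⟩ := takeUntil_append q.1 q.2 hpath hmem
    exact Prod.ext ht hdr

private lemma card_through_zero (u v x : Fin r → Fin n)
    (h : hammingDist u x + hammingDist x v ≠ hammingDist u v) :
    #(((HG r n).finsetWalkLength (hammingDist u v) u v).filter fun p => x ∈ p.support)
      = 0 := by
  rw [Finset.card_eq_zero, Finset.eq_empty_iff_forall_notMem]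
  intro p hp
  rw [Finset.mem_filter, SimpleGraph.mem_finsetWalkLength_iff] at hp
  obtain ⟨hlen, hsup⟩ := hp
  have hsum : (p.takeUntil x hsup).length + (p.dropUntil x hsup).length = p.length := by
    rw [← Walk.length_append, Walk.take_spec]
  have h1 := hd_le_length (p.takeUntil x hsup)
  have h2 := hd_le_length (p.dropUntil x hsup)
  have htri := hammingDist_triangle u x v
  omega


private lemma geodesicCount_eq (u w : Fin r → Fin n) :
    geodesicCount (HG r n) u w = Nat.factorial (hammingDist u w) := by
  have hiff : ∀ p : (HG r n).Walk u w,
      p ∈ (HG r n).finsetWalkLength ((HG r n).dist u w) u w ↔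
        (p.IsPath ∧ p.length = (HG r n).dist u w) := by
    intro p
    rw [SimpleGraph.mem_finsetWalkLength_iff]
    exact ⟨fun h => ⟨p.isPath_of_length_eq_dist h, h⟩, fun h => h.2⟩
  rw [geodesicCount]
  haveI : Fintype {p : (HG r n).Walk u w // p.IsPath ∧ p.length = (HG r n).dist u w} :=
    Fintype.subtype _ hiff
  rw [Nat.card_eq_fintype_card, Fintype.card_of_subtype _ hiff]
  rw [dist_eq_hd]
  exact card_finsetWalkLength_eq _ u w rfl

private lemma geodesicCountThrough_eq (u w x : Fin r → Fin n) :
    geodesicCountThrough (HG r n) u w x =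
      if hammingDist u x + hammingDist x w = hammingDist u w then
        Nat.factorial (hammingDist u x) * Nat.factorial (hammingDist x w) else 0 := by
  have hiff : ∀ p : (HG r n).Walk u w,
      p ∈ (((HG r n).finsetWalkLength ((HG r n).dist u w) u w).filter
          fun p => x ∈ p.support) ↔
        (p.IsPath ∧ p.length = (HG r n).dist u w ∧ x ∈ p.support) := by
    intro p
    rw [Finset.mem_filter, SimpleGraph.mem_finsetWalkLength_iff]
    exact ⟨fun h => ⟨p.isPath_of_length_eq_dist h.1, h.1, h.2⟩, fun h => ⟨h.2.1, h.2.2⟩⟩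
  rw [geodesicCountThrough]
  haveI : Fintype {p : (HG r n).Walk u w //
      p.IsPath ∧ p.length = (HG r n).dist u w ∧ x ∈ p.support} := Fintype.subtype _ hiff
  rw [Nat.card_eq_fintype_card, Fintype.card_of_subtype _ hiff]
  rw [dist_eq_hd]
  split_ifs with h
  · exact card_through_eq u w x h
  · exact card_through_zero u w x h

private lemma between_iff (u w x : Fin r → Fin n) :
    hammingDist u x + hammingDist x w = hammingDist u w ↔
      Disjoint (univ.filter fun i => u i ≠ x i) (univ.filter fun i => w i ≠ x i) := by
  set A := univ.filter fun i => u i ≠ x i with hA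
  set B := univ.filter fun i => w i ≠ x i with hB
  have hxw : hammingDist x w = #B := by rw [hammingDist_comm, hd_filter]
  have hux : hammingDist u x = #A := hd_filter u x
  have hsub : (univ.filter fun i => u i ≠ w i) ⊆ A ∪ B := by
    intro i hi
    rw [Finset.mem_filter] at hi
    rw [Finset.mem_union, hA, hB, Finset.mem_filter, Finset.mem_filter]
    by_contra hcon
    push_neg at hcon
    obtain ⟨h1, h2⟩ := hcon
    exact hi.2 ((h1 (Finset.mem_univ i)).trans (h2 (Finset.mem_univ i)).symm)
  have hci := Finset.card_union_add_card_inter A B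
  constructor
  · intro h
    have hle : hammingDist u w ≤ #(A ∪ B) := by
      rw [hd_filter]; exact Finset.card_le_card hsub
    rw [Finset.disjoint_iff_inter_eq_empty, ← Finset.card_eq_zero]
    omega
  · intro hdisj
    have hUNION : (univ.filter fun i => u i ≠ w i) = A ∪ B := by
      apply Finset.Subset.antisymm hsub
      intro i hi
      rw [Finset.mem_filter]
      refine ⟨Finset.mem_univ i, ?_⟩
      rw [Finset.mem_union] at hi
      rcases hi with hi | hi
      · have hiB : i ∉ B := Finset.disjoint_left.mp hdisj hi
        rw [hA, Finset.mem_filter] at hi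
        rw [hB, Finset.mem_filter] at hiB
        push_neg at hiB
        rw [hiB (Finset.mem_univ i)]
        exact hi.2
      · have hiA : i ∉ A := Finset.disjoint_right.mp hdisj hi
        rw [hB, Finset.mem_filter] at hi
        rw [hA, Finset.mem_filter] at hiA
        push_neg at hiA
        rw [hiA (Finset.mem_univ i)]
        exact fun hc => hi.2 hc.symm
    rw [hd_filter u w, hUNION, Finset.card_union_of_disjoint hdisj, hux, hxw]

private lemma fiber_card (x : Fin r → Fin n) (A : Finset (Fin r)) :
    #(univ.filter fun u : Fin r → Fin n => (univ.filter fun i => u i ≠ x i) = A)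
      = (n - 1) ^ A.card := by
  rw [← Fintype.card_subtype]
  have e : {u : Fin r → Fin n // (univ.filter fun i => u i ≠ x i) = A} ≃
      (∀ i : A, {y : Fin n // y ≠ x i.1}) :=
    { toFun := fun u i => ⟨u.1 i.1, by
        have h := u.2
        have hi : (i.1 : Fin r) ∈ univ.filter fun j => u.1 j ≠ x j := by
          rw [h]; exact i.2
        exact (Finset.mem_filter.mp hi).2⟩
      invFun := fun g => ⟨fun i => if h : i ∈ A then (g ⟨i, h⟩).1 else x i, by
        ext i
        by_cases h : i ∈ A
        · simp only [Finset.mem_filter, Finset.mem_univ, true_and, dif_pos h]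
          exact iff_of_true (g ⟨i, h⟩).2 h
        · simp only [Finset.mem_filter, Finset.mem_univ, true_and, dif_neg h]
          exact iff_of_false (fun hc => hc rfl) h⟩
      left_inv := fun u => by
        apply Subtype.ext
        funext i
        by_cases h : i ∈ A
        · simp [dif_pos h]
        · simp only [dif_neg h]
          have h2 : i ∉ univ.filter fun j => u.1 j ≠ x j := by
            rw [u.2]; exact h
          rw [Finset.mem_filter] at h2
          push_neg at h2
          exact (h2 (Finset.mem_univ i)).symm
      right_inv := fun g => by
        funext i
        apply Subtype.ext
        simp [dif_pos i.2] }
  rw [Fintype.card_congr e, Fintype.card_pi]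
  have hsub : ∀ i : Fin n, Fintype.card {y : Fin n // y ≠ i} = n - 1 := by
    intro i
    rw [Fintype.card_subtype_compl (· = i)]
    simp [Fintype.card_subtype_eq]
  calc (∏ i : A, Fintype.card {y : Fin n // y ≠ x i.1})
      = ∏ _i : A, (n-1) := by
        apply Finset.prod_congr rfl
        intro i _
        exact hsub (x i.1)
    _ = (n-1) ^ A.card := by
        rw [Finset.prod_const, Finset.card_univ, Fintype.card_coe]

private lemma sum_fiber (x : Fin r → Fin n) (F : Finset (Fin r) → ℚ) :
    ∑ u : Fin r → Fin n, F (univ.filter fun i => u i ≠ x i)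
      = ∑ A : Finset (Fin r), ((n - 1 : ℕ) : ℚ) ^ A.card * F A := by
  rw [← Finset.sum_fiberwise_of_maps_to
    (g := fun u : Fin r → Fin n => univ.filter fun i => u i ≠ x i)
    (t := univ) (fun _ _ => Finset.mem_univ _)
    (f := fun u => F (univ.filter fun i => u i ≠ x i))]
  apply Finset.sum_congr rfl
  intro A _
  have h1 : ∀ u ∈ univ.filter
      (fun u : Fin r → Fin n => (univ.filter fun i => u i ≠ x i) = A),
      F (univ.filter fun i => u i ≠ x i) = F A := by
    intro u hu
    rw [(Finset.mem_filter.mp hu).2]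
  rw [Finset.sum_congr rfl h1, Finset.sum_const, fiber_card, nsmul_eq_mul, Nat.cast_pow]


open scoped Classical in
private noncomputable def Fq {r : ℕ} (A B : Finset (Fin r)) : ℚ :=
  if Disjoint A B ∧ A.card ≠ 0 ∧ B.card ≠ 0 then
    (Nat.factorial A.card * Nat.factorial B.card : ℚ) /
      (Nat.factorial (A.card + B.card) : ℚ)
  else 0

private lemma step1 (v u w : Fin r → Fin n) :
    (if u ≠ w ∧ u ≠ v ∧ w ≠ v then pairDependency (HG r n) u w v else 0)
      = Fq (univ.filter fun i => u i ≠ v i) (univ.filter fun i => w i ≠ v i) := by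
  set A := univ.filter fun i => u i ≠ v i with hA
  set B := univ.filter fun i => w i ≠ v i with hB
  have hdA : hammingDist u v = #A := hd_filter u v
  have hdB : hammingDist v w = #B := by rw [hammingDist_comm]; exact hd_filter w v
  have hdB' : hammingDist w v = #B := hd_filter w v
  by_cases hcond : u ≠ w ∧ u ≠ v ∧ w ≠ v
  · rw [if_pos hcond]
    rw [pairDependency, geodesicCount_eq, geodesicCountThrough_eq]
    by_cases hbet : hammingDist u v + hammingDist v w = hammingDist u w
    · rw [if_pos hbet, Fq, if_pos ?side]
      case side =>
        refine ⟨(between_iff u w v).mp hbet, ?_, ?_⟩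
        · intro h0
          exact hcond.2.1 (eq_of_hammingDist_eq_zero (by rw [hdA]; exact h0))
        · intro h0
          exact hcond.2.2 (eq_of_hammingDist_eq_zero (by rw [hdB']; exact h0))
      rw [← hbet, hdA, hdB]
      push_cast
      ring
    · rw [if_neg hbet, Fq, if_neg ?_]
      · simp
      · intro hcon
        exact hbet ((between_iff u w v).mpr hcon.1)
  · rw [if_neg hcond, Fq, if_neg ?_]
    intro hcon
    apply hcond
    have hune : u ≠ v := by
      intro h
      apply hcon.2.1
      rw [← hdA, h, hammingDist_self]
    have hwne : w ≠ v := by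
      intro h
      apply hcon.2.2
      rw [← hdB', h, hammingDist_self]
    have huw : u ≠ w := by
      intro h
      have hAB : A = B := by rw [hA, hB, h]
      have hbot := disjoint_self.mp (hAB ▸ hcon.1)
      apply hcon.2.2
      rw [hbot]
      simp
    exact ⟨huw, hune, hwne⟩

private def psi (n r a : ℕ) : ℚ :=
  ∑ b ∈ Finset.range (r - a + 1), ((r - a).choose b : ℚ) *
    (((n - 1 : ℕ) : ℚ) ^ b * (if a ≠ 0 ∧ b ≠ 0 then
      ((Nat.factorial a : ℚ) * Nat.factorial b) / (Nat.factorial (a + b) : ℚ) else 0))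

private lemma step3 (A : Finset (Fin r)) :
    ∑ B : Finset (Fin r), ((n - 1 : ℕ) : ℚ) ^ B.card * Fq A B = psi n r A.card := by
  have hzero : ∀ B ∈ (univ : Finset (Finset (Fin r))), B ∉ Aᶜ.powerset →
      ((n - 1 : ℕ) : ℚ) ^ B.card * Fq A B = 0 := by
    intro B _ hB
    rw [Finset.mem_powerset] at hB
    have hnd : ¬ Disjoint A B := fun hd => hB (le_compl_iff_disjoint_left.mpr hd)
    rw [Fq, if_neg (fun hcon => hnd hcon.1), mul_zero]
  rw [← Finset.sum_subset (Finset.subset_univ (Aᶜ.powerset)) hzero]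
  have hcongr : ∀ B ∈ Aᶜ.powerset,
      ((n - 1 : ℕ) : ℚ) ^ B.card * Fq A B =
      ((n - 1 : ℕ) : ℚ) ^ B.card * (if A.card ≠ 0 ∧ B.card ≠ 0 then
        ((Nat.factorial A.card : ℚ) * Nat.factorial B.card) /
          (Nat.factorial (A.card + B.card) : ℚ) else 0) := by
    intro B hB
    rw [Finset.mem_powerset] at hB
    have hd : Disjoint A B := le_compl_iff_disjoint_left.mp hB
    rw [Fq]
    by_cases hc : A.card ≠ 0 ∧ B.card ≠ 0
    · rw [if_pos ⟨hd, hc.1, hc.2⟩, if_pos hc]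
    · rw [if_neg (fun hcon => hc ⟨hcon.2.1, hcon.2.2⟩), if_neg hc]
  rw [Finset.sum_congr rfl hcongr]
  have hps : ∑ B ∈ Aᶜ.powerset, (((n - 1 : ℕ) : ℚ) ^ B.card *
        (if A.card ≠ 0 ∧ B.card ≠ 0 then
          ((Nat.factorial A.card : ℚ) * Nat.factorial B.card) /
            (Nat.factorial (A.card + B.card) : ℚ) else 0))
      = ∑ b ∈ Finset.range (#(Aᶜ) + 1), (#(Aᶜ)).choose b •
          (((n - 1 : ℕ) : ℚ) ^ b * (if A.card ≠ 0 ∧ b ≠ 0 then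
            ((Nat.factorial A.card : ℚ) * Nat.factorial b) /
              (Nat.factorial (A.card + b) : ℚ) else 0)) :=
    Finset.sum_powerset_apply_card
      (f := fun b => ((n - 1 : ℕ) : ℚ) ^ b * (if A.card ≠ 0 ∧ b ≠ 0 then
        ((Nat.factorial A.card : ℚ) * Nat.factorial b) /
          (Nat.factorial (A.card + b) : ℚ) else 0)) (x := Aᶜ)
  rw [hps]
  have hcc : #(Aᶜ) = r - A.card := by
    rw [Finset.card_compl, Fintype.card_fin]
  rw [hcc, psi]
  apply Finset.sum_congr rfl
  intro b _
  rw [nsmul_eq_mul]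

private lemma step4 :
    ∑ A : Finset (Fin r), ((n - 1 : ℕ) : ℚ) ^ A.card * psi n r A.card
      = ∑ a ∈ Finset.range (r + 1), (r.choose a : ℚ) *
          (((n - 1 : ℕ) : ℚ) ^ a * psi n r a) := by
  have h : ∑ A ∈ (univ : Finset (Fin r)).powerset,
        (((n - 1 : ℕ) : ℚ) ^ A.card * psi n r A.card)
      = ∑ a ∈ Finset.range (#(univ : Finset (Fin r)) + 1),
          (#(univ : Finset (Fin r))).choose a •
            (((n - 1 : ℕ) : ℚ) ^ a * psi n r a) :=
    Finset.sum_powerset_apply_card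
      (f := fun a => ((n - 1 : ℕ) : ℚ) ^ a * psi n r a) (x := (univ : Finset (Fin r)))
  rw [Finset.powerset_univ, Finset.card_univ, Fintype.card_fin] at h
  rw [h]
  apply Finset.sum_congr rfl
  intro a _
  rw [nsmul_eq_mul]

private lemma choose_id {a b : ℕ} (ha : a + b ≤ r) :
    (r.choose a : ℚ) * ((r - a).choose b : ℚ) *
      ((Nat.factorial a : ℚ) * Nat.factorial b / (Nat.factorial (a + b) : ℚ))
      = (r.choose (a + b) : ℚ) := by
  have e1 : (r.choose a : ℚ) =
      (Nat.factorial r : ℚ) / (Nat.factorial a * Nat.factorial (r - a)) :=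
    Nat.cast_choose ℚ (by omega)
  have e2 : ((r - a).choose b : ℚ) =
      (Nat.factorial (r - a) : ℚ) / (Nat.factorial b * Nat.factorial (r - a - b)) :=
    Nat.cast_choose ℚ (by omega)
  have e3 : (r.choose (a + b) : ℚ) =
      (Nat.factorial r : ℚ) / (Nat.factorial (a + b) * Nat.factorial (r - a - b)) := by
    have hsub : r - (a + b) = r - a - b := by omega
    rw [Nat.cast_choose ℚ ha, hsub]
  rw [e1, e2, e3]
  have f1 : (Nat.factorial a : ℚ) ≠ 0 := Nat.cast_ne_zero.mpr (Nat.factorial_ne_zero a)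
  have f2 : (Nat.factorial b : ℚ) ≠ 0 := Nat.cast_ne_zero.mpr (Nat.factorial_ne_zero b)
  have f3 : (Nat.factorial (r - a) : ℚ) ≠ 0 := Nat.cast_ne_zero.mpr (Nat.factorial_ne_zero _)
  have f4 : (Nat.factorial (r - a - b) : ℚ) ≠ 0 := Nat.cast_ne_zero.mpr (Nat.factorial_ne_zero _)
  have f5 : (Nat.factorial (a + b) : ℚ) ≠ 0 := Nat.cast_ne_zero.mpr (Nat.factorial_ne_zero _)
  field_simp

private lemma step5 (hn : 2 ≤ n) (hr : 1 ≤ r) :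
    ∑ a ∈ Finset.range (r + 1), (r.choose a : ℚ) *
        (((n - 1 : ℕ) : ℚ) ^ a * psi n r a)
      = ((r : ℚ) - 1) * (n : ℚ) ^ r - (r : ℚ) * (n : ℚ) ^ (r - 1) + 1 := by
  set c : ℚ := ((n - 1 : ℕ) : ℚ) with hcdef
  have hc1 : c + 1 = (n : ℚ) := by
    rw [hcdef, Nat.cast_sub (by omega)]
    push_cast
    ring
  have hbin : ∀ m : ℕ, ∑ d ∈ Finset.range (m + 1), (m.choose d : ℚ) * c ^ d
      = (n : ℚ) ^ m := by
    intro m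
    have h := add_pow c 1 m
    rw [hc1] at h
    rw [h]
    apply Finset.sum_congr rfl
    intro d _
    rw [one_pow, mul_one, mul_comm]
  -- 5b: rewrite each term
  have h5b : ∀ a ∈ Finset.range (r + 1),
      (r.choose a : ℚ) * (c ^ a * psi n r a)
        = ∑ b ∈ Finset.range (r - a + 1),
            (if a ≠ 0 ∧ b ≠ 0 then (r.choose (a + b) : ℚ) * c ^ (a + b) else 0) := by
    intro a haa
    rw [Finset.mem_range] at haa
    rw [psi, Finset.mul_sum, Finset.mul_sum]
    apply Finset.sum_congr rfl
    intro b hb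
    rw [Finset.mem_range] at hb
    have hab : a + b ≤ r := by omega
    by_cases hP : a ≠ 0 ∧ b ≠ 0
    · simp only [if_pos hP]
      have hch := choose_id (r := r) hab
      calc (r.choose a : ℚ) * (c ^ a * (((r - a).choose b : ℚ) *
              (((n - 1 : ℕ) : ℚ) ^ b * ((Nat.factorial a : ℚ) * Nat.factorial b /
                (Nat.factorial (a + b) : ℚ)))))
          = ((r.choose a : ℚ) * ((r - a).choose b : ℚ) *
              ((Nat.factorial a : ℚ) * Nat.factorial b / (Nat.factorial (a + b) : ℚ)))
            * (c ^ a * c ^ b) := by rw [hcdef]; ring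
        _ = (r.choose (a + b) : ℚ) * c ^ (a + b) := by rw [hch, ← pow_add]
    · simp only [if_neg hP]
      simp
  rw [Finset.sum_congr rfl h5b]
  -- 5c/5d: convert inner sums
  have h5cd : ∀ a ∈ Finset.range (r + 1),
      (∑ b ∈ Finset.range (r - a + 1),
        (if a ≠ 0 ∧ b ≠ 0 then (r.choose (a + b) : ℚ) * c ^ (a + b) else 0))
      = ∑ d ∈ Finset.range (r + 1),
          (if a ≠ 0 ∧ a < d then (r.choose d : ℚ) * c ^ d else 0) := by
    intro a haa
    rw [Finset.mem_range] at haa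
    have hIco : ∑ d ∈ Finset.Ico a (r + 1),
        (if a ≠ 0 ∧ a < d then (r.choose d : ℚ) * c ^ d else 0)
        = ∑ b ∈ Finset.range (r + 1 - a),
            (if a ≠ 0 ∧ a < a + b then (r.choose (a + b) : ℚ) * c ^ (a + b) else 0) :=
      Finset.sum_Ico_eq_sum_range
        (fun d => if a ≠ 0 ∧ a < d then (r.choose d : ℚ) * c ^ d else 0) a (r + 1)
    have hr1a : r + 1 - a = r - a + 1 := by omega
    rw [hr1a] at hIco
    rw [show (∑ b ∈ Finset.range (r - a + 1),
        (if a ≠ 0 ∧ b ≠ 0 then (r.choose (a + b) : ℚ) * c ^ (a + b) else 0))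
      = ∑ b ∈ Finset.range (r - a + 1),
        (if a ≠ 0 ∧ a < a + b then (r.choose (a + b) : ℚ) * c ^ (a + b) else 0) from
      Finset.sum_congr rfl fun b _ => by
        apply if_congr _ rfl rfl
        constructor <;> (rintro ⟨h1, h2⟩; exact ⟨h1, by omega⟩)]
    rw [← hIco]
    apply Finset.sum_subset
    · intro d hd
      rw [Finset.mem_Ico] at hd
      rw [Finset.mem_range]
      omega
    · intro d hd hd2
      rw [Finset.mem_range] at hd
      rw [Finset.mem_Ico] at hd2
      rw [if_neg]
      rintro ⟨h1, h2⟩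
      omega
  rw [Finset.sum_congr rfl h5cd]
  rw [Finset.sum_comm]
  -- 5e : count the a's
  have h5e : ∀ d ∈ Finset.range (r + 1),
      (∑ a ∈ Finset.range (r + 1),
        (if a ≠ 0 ∧ a < d then (r.choose d : ℚ) * c ^ d else 0))
      = ((d - 1 : ℕ) : ℚ) * ((r.choose d : ℚ) * c ^ d) := by
    intro d hd
    rw [Finset.mem_range] at hd
    rw [← Finset.sum_filter]
    have hfil : (Finset.range (r + 1)).filter (fun a => a ≠ 0 ∧ a < d)
        = Finset.Ico 1 d := by
      ext a
      simp only [Finset.mem_filter, Finset.mem_range, Finset.mem_Ico]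
      omega
    rw [hfil, Finset.sum_const, Nat.card_Ico, nsmul_eq_mul]
  rw [Finset.sum_congr rfl h5e]
  -- 5f : final computation
  have hpeel := Finset.sum_range_succ'
    (fun d => ((d - 1 : ℕ) : ℚ) * ((r.choose d : ℚ) * c ^ d)) r
  rw [hpeel]
  simp only [Nat.add_sub_cancel, Nat.zero_sub, Nat.cast_zero, zero_mul, add_zero]
  have hsplit : ∀ i : ℕ, (i : ℚ) * ((r.choose (i + 1) : ℚ) * c ^ (i + 1))
      = ((i + 1 : ℕ) : ℚ) * ((r.choose (i + 1) : ℚ) * c ^ (i + 1))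
        - (r.choose (i + 1) : ℚ) * c ^ (i + 1) := by
    intro i
    push_cast
    ring
  rw [Finset.sum_congr rfl (fun i _ => hsplit i), Finset.sum_sub_distrib]
  have hr1 : r - 1 + 1 = r := by omega
  -- A1
  have hid : ∀ i : ℕ, (r.choose (i + 1) * (i + 1) : ℕ) = r * (r - 1).choose i := by
    intro i
    have h0 := Nat.add_one_mul_choose_eq (r - 1) i
    rw [hr1] at h0
    omega
  have hA1 : ∑ i ∈ Finset.range r, ((i + 1 : ℕ) : ℚ) *
      ((r.choose (i + 1) : ℚ) * c ^ (i + 1))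
      = (r : ℚ) * c * (n : ℚ) ^ (r - 1) := by
    have hb := hbin (r - 1)
    rw [hr1] at hb
    rw [← hb, Finset.mul_sum]
    apply Finset.sum_congr rfl
    intro i _
    have h2 : ((r.choose (i + 1) : ℚ) * ((i + 1 : ℕ) : ℚ)) = (r : ℚ) * ((r - 1).choose i : ℚ) := by
      rw [← Nat.cast_mul, hid i, Nat.cast_mul]
    calc ((i + 1 : ℕ) : ℚ) * ((r.choose (i + 1) : ℚ) * c ^ (i + 1))
        = ((r.choose (i + 1) : ℚ) * ((i + 1 : ℕ) : ℚ)) * c ^ (i + 1) := by ring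
      _ = (r : ℚ) * ((r - 1).choose i : ℚ) * c ^ (i + 1) := by rw [h2]
      _ = (r : ℚ) * c * (((r - 1).choose i : ℚ) * c ^ i) := by rw [pow_succ]; ring
  have hA2 : ∑ i ∈ Finset.range r, (r.choose (i + 1) : ℚ) * c ^ (i + 1)
      = (n : ℚ) ^ r - 1 := by
    have hb := hbin r
    rw [Finset.sum_range_succ' (fun d => (r.choose d : ℚ) * c ^ d) r] at hb
    simp only [Nat.choose_zero_right, Nat.cast_one, pow_zero, one_mul, mul_one] at hb
    linarith
  rw [hA1, hA2]
  have hnr : (n : ℚ) ^ r = (n : ℚ) ^ (r - 1) * n := by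
    conv_lhs => rw [show r = (r - 1) + 1 by omega]
    rw [pow_succ]
  have hcn : c = (n : ℚ) - 1 := by
    rw [hcdef, Nat.cast_sub (by omega)]
    push_cast
    ring
  rw [hnr, hcn]
  ring

end AuxP

/-- For `n ≥ 2`, `r ≥ 1` and any vertex `v` of the `r`-fold Cartesian
power of `K_n`, `B(v) = (1/2)·((r-1)·n^r - r·n^(r-1) + 1)`. -/
theorem betweenness_completePower (n r : ℕ) (hn : 2 ≤ n) (hr : 1 ≤ r)
    (v : Fin r → Fin n) :
    betweenness (boxProdPi fun _ : Fin r => (⊤ : SimpleGraph (Fin n))) v =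
      (1 / 2) * (((r : ℚ) - 1) * (n : ℚ) ^ r - (r : ℚ) * (n : ℚ) ^ (r - 1) + 1) := by
  classical
  show betweenness (HG r n) v = _
  rw [betweenness]
  congr 1
  calc ∑ u : Fin r → Fin n, ∑ w : Fin r → Fin n,
        (if u ≠ w ∧ u ≠ v ∧ w ≠ v then pairDependency (HG r n) u w v else 0)
      = ∑ u : Fin r → Fin n, ∑ w : Fin r → Fin n,
          Fq (univ.filter fun i => u i ≠ v i) (univ.filter fun i => w i ≠ v i) := by
        apply Finset.sum_congr rfl
        intro u _
        apply Finset.sum_congr rfl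
        intro w _
        exact step1 v u w
    _ = ∑ u : Fin r → Fin n, psi n r (univ.filter fun i => u i ≠ v i).card := by
        apply Finset.sum_congr rfl
        intro u _
        rw [sum_fiber v (fun B => Fq (univ.filter fun i => u i ≠ v i) B)]
        exact step3 _
    _ = ∑ A : Finset (Fin r), ((n - 1 : ℕ) : ℚ) ^ A.card * psi n r A.card := by
        exact sum_fiber v (fun A => psi n r A.card)
    _ = ∑ a ∈ Finset.range (r + 1), (r.choose a : ℚ) *
          (((n - 1 : ℕ) : ℚ) ^ a * psi n r a) := step4
    _ = ((r : ℚ) - 1) * (n : ℚ) ^ r - (r : ℚ) * (n : ℚ) ^ (r - 1) + 1 := step5 hn hr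
end
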